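/- Mixed update/downdate: Let X₁ be m×n₁ with sample covariance S₁, let Y_d be an m×k_d submatrix of columns of X₁, let Y_u be an m×k_u matrix, and let X₂ (m×n₂, n₂ = n₁ + k_u − k_d) be formed by removing the columns Y_d from X₁ and appending the columns of Y_u; let S₂ be the sample covariance of X₂ and x̄₁, x̄₂ the column means of X₁, X₂. Then (n₂−1)·S₂ = (n₁−1)·S₁ + (Y_u − x̄₁·1_{k_u}ᵀ)(Y_u − x̄₂·1_{k_u}ᵀ)ᵀ − (Y_d − x̄₁·1_{k_d}ᵀ)(Y_d − x̄₂·1_{k_d}ᵀ)ᵀ. -/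

import Mathlib

open Matrix

/-- Sample covariance (with Bessel's correction) of an m×N data matrix. -/
noncomputable def sampleCov {m : ℕ} {ι : Type*} [Fintype ι]
    (Z : Matrix (Fin m) ι ℝ) : Matrix (Fin m) (Fin m) ℝ :=
  ((Fintype.card ι : ℝ) - 1)⁻¹ •
    ((Matrix.of fun i j => Z i j - (∑ l, Z i l) / (Fintype.card ι : ℝ)) *
      (Matrix.of fun i j => Z i j - (∑ l, Z i l) / (Fintype.card ι : ℝ))ᵀ)

lemma shift_left_center {ι : Type*} [Fintype ι] (f g : ι → ℝ) (a a' b : ℝ)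
    (h : ∑ j, (g j - b) = 0) :
    ∑ j, (f j - a) * (g j - b) = ∑ j, (f j - a') * (g j - b) := by
  have e : ∀ c : ℝ, ∑ j, (f j - c) * (g j - b)
      = ∑ j, f j * (g j - b) - c * ∑ j, (g j - b) := by
    intro c
    rw [Finset.mul_sum, ← Finset.sum_sub_distrib]
    exact Finset.sum_congr rfl fun j _ => by ring
  rw [e a, e a', h]; ring

lemma shift_right_center {ι : Type*} [Fintype ι] (f g : ι → ℝ) (a b b' : ℝ)
    (h : ∑ j, (f j - a) = 0) :
    ∑ j, (f j - a) * (g j - b) = ∑ j, (f j - a) * (g j - b') := by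
  have e : ∀ c : ℝ, ∑ j, (f j - a) * (g j - c)
      = ∑ j, (f j - a) * g j - c * ∑ j, (f j - a) := by
    intro c
    rw [Finset.mul_sum, ← Finset.sum_sub_distrib]
    exact Finset.sum_congr rfl fun j _ => by ring
  rw [e b, e b', h]; ring

/-- Mixed update/downdate of the sample covariance matrix. -/
theorem mixed_update_downdate {m n₁ ku kd : ℕ}
    (hn₁ : 2 ≤ n₁) (hkd : kd < n₁) (hn₂ : 2 ≤ n₁ + ku - kd)
    (X₁ : Matrix (Fin m) (Fin n₁) ℝ) (J : Finset (Fin n₁)) (hJ : J.card = kd)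
    (Yd : Matrix (Fin m) {j // j ∈ J} ℝ) (hYd : Yd = X₁.submatrix id Subtype.val)
    (Yu : Matrix (Fin m) (Fin ku) ℝ)
    (X₂ : Matrix (Fin m) ({j // j ∉ J} ⊕ Fin ku) ℝ)
    (hX₂ : X₂ = Matrix.fromCols (X₁.submatrix id Subtype.val) Yu)
    (xbar₁ xbar₂ : Fin m → ℝ)
    (hxbar₁ : ∀ i, xbar₁ i = (∑ j, X₁ i j) / (n₁ : ℝ))
    (hxbar₂ : ∀ i, xbar₂ i = (∑ j, X₂ i j) / ((n₁ : ℝ) + ku - kd)) :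
    ((n₁ : ℝ) + ku - kd - 1) • sampleCov X₂ =
      ((n₁ : ℝ) - 1) • sampleCov X₁ +
        (Matrix.of fun i (j : Fin ku) => Yu i j - xbar₁ i) *
          (Matrix.of fun i (j : Fin ku) => Yu i j - xbar₂ i)ᵀ -
        (Matrix.of fun i (j : {j // j ∈ J}) => Yd i j - xbar₁ i) *
          (Matrix.of fun i (j : {j // j ∈ J}) => Yd i j - xbar₂ i)ᵀ := by
  have hkdle : kd ≤ n₁ := hkd.le
  have hcardnat : Fintype.card ({j // j ∉ J} ⊕ Fin ku) = n₁ - kd + ku := by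
    simp [Fintype.card_subtype, Finset.filter_not, Finset.filter_mem_eq_inter, ← hJ,
      Finset.card_sdiff_of_subset (Finset.subset_univ J)]
  have hcard : (Fintype.card ({j // j ∉ J} ⊕ Fin ku) : ℝ) = (n₁ : ℝ) + ku - kd := by
    rw [hcardnat]
    push_cast [Nat.cast_sub hkdle]
    ring
  have hN₂2 : (2 : ℝ) ≤ (n₁ : ℝ) + ku - kd := by
    have : (2 : ℝ) ≤ ((n₁ - kd + ku : ℕ) : ℝ) := by
      exact_mod_cast (by omega : 2 ≤ n₁ - kd + ku)
    calc (2:ℝ) ≤ ((n₁ - kd + ku : ℕ) : ℝ) := this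
      _ = (n₁ : ℝ) + ku - kd := by push_cast [Nat.cast_sub hkdle]; ring
  have hN₂ne : ((n₁ : ℝ) + ku - kd) ≠ 0 := by linarith
  have hN₂1ne : ((n₁ : ℝ) + ku - kd - 1) ≠ 0 := by linarith
  have hn₁pos : (0 : ℝ) < (n₁ : ℝ) := by exact_mod_cast Nat.lt_of_lt_of_le Nat.zero_lt_two hn₁
  have hn₁ne : (n₁ : ℝ) ≠ 0 := ne_of_gt hn₁pos
  have hn₁1ne : ((n₁ : ℝ) - 1) ≠ 0 := by
    have : (2:ℝ) ≤ n₁ := by exact_mod_cast hn₁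
    linarith
  -- centered sums vanish
  have hzero₂ : ∀ r, ∑ j, (X₂ r j - xbar₂ r) = 0 := by
    intro r
    rw [Finset.sum_sub_distrib, Finset.sum_const, Finset.card_univ, hxbar₂, nsmul_eq_mul]
    rw [hcard]
    field_simp
    ring
  have hzero₁ : ∀ r, ∑ j, (X₁ r j - xbar₁ r) = 0 := by
    intro r
    rw [Finset.sum_sub_distrib, Finset.sum_const, Finset.card_univ, hxbar₁, nsmul_eq_mul,
      Fintype.card_fin]
    field_simp
    ring
  ext i k
  simp only [Matrix.sub_apply, Matrix.add_apply, Matrix.smul_apply, sampleCov,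
    Matrix.mul_apply, Matrix.transpose_apply, Matrix.of_apply, smul_eq_mul,
    Finset.mul_sum, hcard, Fintype.card_fin]
  have hmean₂ : ∀ r j, X₂ r j - (∑ l, X₂ r l) / ((n₁:ℝ) + ku - kd) = X₂ r j - xbar₂ r := by
    intro r j; rw [hxbar₂]
  have hmean₁ : ∀ r j, X₁ r j - (∑ l, X₁ r l) / (n₁:ℝ) = X₁ r j - xbar₁ r := by
    intro r j; rw [hxbar₁]
  simp only [hmean₁, hmean₂]
  simp only [← mul_assoc, mul_inv_cancel₀ hN₂1ne, mul_inv_cancel₀ hn₁1ne, one_mul]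
  rw [shift_left_center (X₂ i) (X₂ k) (xbar₂ i) (xbar₁ i) (xbar₂ k) (hzero₂ k),
      shift_right_center (X₁ i) (X₁ k) (xbar₁ i) (xbar₁ k) (xbar₂ k) (hzero₁ i)]
  rw [Fintype.sum_sum_type]
  simp only [hX₂, Matrix.fromCols_apply_inl, Matrix.fromCols_apply_inr,
    Matrix.submatrix_apply, id_eq, hYd]
  rw [show (∑ x : Fin n₁, (X₁ i x - xbar₁ i) * (X₁ k x - xbar₂ k))
      = ∑ x : {j // j ∈ J}, (X₁ i x - xbar₁ i) * (X₁ k x - xbar₂ k)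
        + ∑ x : {j // j ∉ J}, (X₁ i x - xbar₁ i) * (X₁ k x - xbar₂ k) from ?_]
  · ring
  · rw [← Finset.sum_add_sum_compl J, Finset.sum_subtype J (fun x => Iff.rfl),
        Finset.sum_subtype Jᶜ (fun x => Finset.mem_compl)]
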